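/- Let G be a connected graph on n vertices that contains a cycle, and let G' be the graph obtained by subdividing every edge of G once. Then G' has a matching covering all of the original n vertices; in particular MM(G') ≥ n. -/

import Mathlib

variable {V : Type*}

/-- `M` is a matching in `G`: a finite set of edges of `G` that are pairwise non-incident. -/
def IsMatchingSet (G : SimpleGraph V) (M : Finset (Sym2 V)) : Prop :=
  (∀ e ∈ M, e ∈ G.edgeSet) ∧
  ∀ e ∈ M, ∀ f ∈ M, e ≠ f → ∀ v : V, v ∈ e → v ∉ f

/-- `M` is an induced matching in `G`: a matching such that no edge of `G`
joins two distinct edges of `M`. -/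
def IsInducedMatchingSet (G : SimpleGraph V) (M : Finset (Sym2 V)) : Prop :=
  IsMatchingSet G M ∧
  ∀ e ∈ M, ∀ f ∈ M, e ≠ f → ∀ a ∈ e, ∀ b ∈ f, ¬ G.Adj a b

/-- `S` is an independent set in `G`. -/
def IsIndepFinset (G : SimpleGraph V) (S : Finset V) : Prop :=
  ∀ a ∈ S, ∀ b ∈ S, ¬ G.Adj a b

/-- Maximum matching size `MM(G)`. -/
noncomputable def MMn (G : SimpleGraph V) : ℕ :=
  sSup {n | ∃ M : Finset (Sym2 V), IsMatchingSet G M ∧ M.card = n}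

/-- Maximum induced matching size `IM(G)`. -/
noncomputable def IMn (G : SimpleGraph V) : ℕ :=
  sSup {n | ∃ M : Finset (Sym2 V), IsInducedMatchingSet G M ∧ M.card = n}

/-- Maximum independent set size `IS(G)`. -/
noncomputable def ISn (G : SimpleGraph V) : ℕ :=
  sSup {n | ∃ S : Finset V, IsIndepFinset G S ∧ S.card = n}

/-- Base adjacency of the subdivision (incidence) graph of `G`: an original
vertex is adjacent to an edge-vertex iff it is an endpoint of that edge. -/
def IncAdj (G : SimpleGraph V) : (V ⊕ G.edgeSet) → (V ⊕ G.edgeSet) → Prop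
  | Sum.inl v, Sum.inr e => v ∈ (e : Sym2 V)
  | _, _ => False

/-- The subdivision of `G` (every edge subdivided once), realized as the
incidence bipartite graph on `V(G) ⊕ E(G)`. -/
def Subdivision (G : SimpleGraph V) : SimpleGraph (V ⊕ G.edgeSet) :=
  SimpleGraph.fromRel (IncAdj G)

open SimpleGraph in

lemma aux_reach {G H : SimpleGraph V}
    (h : ∀ a b, G.Adj a b → H.Reachable a b) :
    ∀ {u v : V}, G.Walk u v → H.Reachable u v := by
  intro u v p
  induction p with
  | nil => exact Reachable.refl _
  | cons h' _ ih => exact (h _ _ h').trans ih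

open SimpleGraph in
lemma exists_injection [Fintype V] (G : SimpleGraph V)
    (hconn : G.Connected) (hcyc : ¬ G.IsAcyclic) :
    ∃ F : V → G.edgeSet, Function.Injective F ∧ ∀ v, v ∈ (F v : Sym2 V) := by
  classical
  rw [isAcyclic_iff_forall_adj_isBridge] at hcyc
  push_neg at hcyc
  obtain ⟨x, y, hxy, hnb⟩ := hcyc
  rw [SimpleGraph.isBridge_iff] at hnb
  push_neg at hnb
  have hreach := hnb
  set H := G \ SimpleGraph.fromEdgeSet {s(x, y)} with hH
  have hHconn : H.Connected := by
    have key : ∀ a b, G.Adj a b → H.Reachable a b := by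
      intro a b hab
      by_cases hh : s(a, b) = s(x, y)
      · rw [Sym2.eq_iff] at hh
        rcases hh with ⟨rfl, rfl⟩ | ⟨rfl, rfl⟩
        · exact hreach
        · exact hreach.symm
      · refine SimpleGraph.Adj.reachable ⟨hab, ?_⟩
        rw [SimpleGraph.fromEdgeSet_adj]
        exact fun h' => hh (by simpa using h'.1)
    haveI := hconn.nonempty
    exact Connected.mk (fun u v => (hconn u v).elim (fun p => aux_reach key p))
  have step : ∀ v : V, v ≠ x → ∃ u : V, H.Adj v u ∧ H.dist u x < H.dist v x := by
    intro v hv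
    obtain ⟨p, hp⟩ := hHconn.exists_walk_length_eq_dist v x
    cases p with
    | nil => exact absurd rfl hv
    | @cons _ b _ h' q =>
      refine ⟨b, h', lt_of_le_of_lt (SimpleGraph.dist_le q) ?_⟩
      rw [← hp, SimpleGraph.Walk.length_cons]
      omega
  choose u hadj hdist using step
  refine ⟨fun v => if h : v = x then ⟨s(x, y), hxy⟩ else ⟨s(v, u v h), (hadj v h).1⟩, ?_, ?_⟩
  · intro v w hF
    dsimp only at hF
    by_cases hv : v = x <;> by_cases hw : w = x
    · rw [hv, hw]
    · exfalso
      subst hv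
      rw [dif_pos rfl, dif_neg hw, Subtype.ext_iff] at hF
      refine (hadj w hw).2 ?_
      rw [SimpleGraph.fromEdgeSet_adj]
      exact ⟨Set.mem_singleton_iff.mpr hF.symm, (hadj w hw).1.ne⟩
    · exfalso
      subst hw
      rw [dif_neg hv, dif_pos rfl, Subtype.ext_iff] at hF
      refine (hadj v hv).2 ?_
      rw [SimpleGraph.fromEdgeSet_adj]
      exact ⟨Set.mem_singleton_iff.mpr hF, (hadj v hv).1.ne⟩
    · rw [dif_neg hv, dif_neg hw, Subtype.ext_iff] at hF
      rcases Sym2.eq_iff.mp hF with ⟨h1, _⟩ | ⟨h1, h2⟩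
      · exact h1
      · exfalso
        have d1 := hdist v hv
        have d2 := hdist w hw
        rw [h2] at d1
        rw [← h1] at d2
        omega
  · intro v
    by_cases h : v = x
    · subst h; simp
    · simp [dif_neg h]

/-- If `G` is connected and contains a cycle, then its subdivision has a matching
covering all original vertices; in particular `MM(G') ≥ |V(G)|`. -/
theorem stmt_17 {V : Type*} [Fintype V] (G : SimpleGraph V)
    (hconn : G.Connected) (hcyc : ¬ G.IsAcyclic) :
    (∃ M : Finset (Sym2 (V ⊕ G.edgeSet)), IsMatchingSet (Subdivision G) M ∧
      ∀ v : V, ∃ e ∈ M, (Sum.inl v : V ⊕ G.edgeSet) ∈ e) ∧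
    Fintype.card V ≤ MMn (Subdivision G) := by
  classical
  obtain ⟨F, hFinj, hFmem⟩ := exists_injection G hconn hcyc
  set M : Finset (Sym2 (V ⊕ G.edgeSet)) :=
    Finset.univ.image (fun v : V => s(Sum.inl v, Sum.inr (F v))) with hM
  have hedge : ∀ v : V, (Subdivision G).Adj (Sum.inl v) (Sum.inr (F v)) := by
    intro v
    rw [Subdivision, SimpleGraph.fromRel_adj]
    exact ⟨by simp, Or.inl (hFmem v)⟩
  have hinj2 : Function.Injective
      (fun v : V => s((Sum.inl v : V ⊕ G.edgeSet), Sum.inr (F v))) := by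
    intro v w h
    dsimp only at h
    rcases Sym2.eq_iff.mp h with ⟨h1, _⟩ | ⟨h1, _⟩
    · exact Sum.inl.inj h1
    · exact absurd h1 (by simp)
  have hmatch : IsMatchingSet (Subdivision G) M := by
    constructor
    · intro e he
      rw [hM, Finset.mem_image] at he
      obtain ⟨v, _, rfl⟩ := he
      exact hedge v
    · intro e he f hf hef a hae haf
      rw [hM, Finset.mem_image] at he hf
      obtain ⟨v, _, rfl⟩ := he
      obtain ⟨w, _, rfl⟩ := hf
      rcases Sym2.mem_iff.mp hae with rfl | rfl
      · rcases Sym2.mem_iff.mp haf with h | h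
        · exact hef (by rw [Sum.inl.inj h])
        · exact absurd h (by simp)
      · rcases Sym2.mem_iff.mp haf with h | h
        · exact absurd h (by simp)
        · exact hef (by rw [hFinj (Sum.inr.inj h)])
  have hcard : M.card = Fintype.card V := by
    rw [hM, Finset.card_image_of_injective _ hinj2, Finset.card_univ]
  have hcover : ∀ v : V, ∃ e ∈ M, (Sum.inl v : V ⊕ G.edgeSet) ∈ e := by
    intro v
    refine ⟨s(Sum.inl v, Sum.inr (F v)), ?_, ?_⟩
    · rw [hM, Finset.mem_image]
      exact ⟨v, Finset.mem_univ v, rfl⟩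
    · exact Sym2.mem_mk_left _ _
  refine ⟨⟨M, hmatch, hcover⟩, ?_⟩
  haveI : Fintype G.edgeSet := Set.Finite.fintype (Set.toFinite _)
  apply le_csSup
  · refine ⟨Fintype.card (Sym2 (V ⊕ G.edgeSet)), ?_⟩
    rintro n ⟨M', _, rfl⟩
    simpa using Finset.card_le_univ M'
  · exact ⟨M, hmatch, hcard⟩
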